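/- For every u ∈ ℂ with |u| < 1 and every λ ∈ ℝ, one has (1/2π) ∫_0^{2π} |1 − e^{iθ} u|^{−2λ} dθ = Σ_{k=0}^∞ binom(−λ, k)² |u|^{2k}, where binom(−λ, k) = Π_{j=0}^{k−1} (−λ−j) / k! is the generalized binomial coefficient; in particular the series on the right-hand side converges. -/

import Mathlib

open MeasureTheory Real Filter Topology

/-- Generalized binomial coefficient `binom(x, k) = Π_{j<k}(x−j)/k!`. -/
noncomputable def gbinom (x : ℝ) (k : ℕ) : ℝ :=
  (∏ j ∈ Finset.range k, (x - (j : ℝ))) / (Nat.factorial k : ℝ)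

lemma gbinom_zero (x : ℝ) : gbinom x 0 = 1 := by simp [gbinom]

lemma gbinom_succ (x : ℝ) (k : ℕ) :
    ((k : ℝ) + 1) * gbinom x (k + 1) = (x - k) * gbinom x k := by
  have h1 : (Nat.factorial k : ℝ) ≠ 0 := Nat.cast_ne_zero.2 (Nat.factorial_ne_zero k)
  have h2 : ((k : ℝ) + 1) ≠ 0 := by positivity
  rw [gbinom, gbinom, Finset.prod_range_succ, Nat.factorial_succ]
  push_cast
  field_simp

lemma gbinom_succ' (x : ℝ) (k : ℕ) :
    gbinom x (k + 1) = (x - k) / ((k : ℝ) + 1) * gbinom x k := by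
  have h2 : ((k : ℝ) + 1) ≠ 0 := by positivity
  field_simp
  rw [mul_comm, gbinom_succ]

lemma gbinom_eventually_zero {x : ℝ} {k : ℕ} (h : gbinom x k = 0) {n : ℕ} (hn : k ≤ n) :
    gbinom x n = 0 := by
  induction n with
  | zero => simpa [Nat.le_zero.1 hn] using h
  | succ m ih =>
    rcases Nat.lt_or_ge k (m + 1) with h' | h'
    · rw [gbinom_succ', ih (Nat.lt_succ_iff.1 h'), mul_zero]
    · have : k = m + 1 := le_antisymm hn h'
      rw [← this]; exact h

lemma summable_gbinom_mul (x : ℝ) {r : ℝ} (hr0 : 0 ≤ r) (hr : r < 1) :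
    Summable (fun k : ℕ => |gbinom x k| * r ^ k) := by
  by_cases hz : ∃ k, gbinom x k = 0
  · obtain ⟨k, hk⟩ := hz
    apply summable_of_ne_finset_zero (s := Finset.range (k+1))
    intro n hn
    rw [Finset.mem_range, not_lt] at hn
    rw [gbinom_eventually_zero hk (le_trans (Nat.le_succ k) hn), abs_zero, zero_mul]
  · push_neg at hz
    rcases eq_or_lt_of_le hr0 with hr0' | hr0'
    · apply summable_of_ne_finset_zero (s := Finset.range 1)
      intro n hn
      rw [Finset.mem_range, not_lt] at hn
      rw [← hr0', zero_pow (by omega), mul_zero]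
    · apply summable_of_ratio_test_tendsto_lt_one hr
      · filter_upwards with n
        exact mul_ne_zero (abs_ne_zero.2 (hz n)) (pow_ne_zero _ (ne_of_gt hr0'))
      · have key : ∀ n : ℕ, ‖|gbinom x (n+1)| * r ^ (n+1)‖ / ‖|gbinom x n| * r ^ n‖
            = |x - n| / ((n:ℝ)+1) * r := by
          intro n
          have h2 : ((n : ℝ) + 1) ≠ 0 := by positivity
          rw [norm_of_nonneg (by positivity), norm_of_nonneg (by positivity),
            gbinom_succ', abs_mul, abs_div, pow_succ,
            abs_of_nonneg (by positivity : (0:ℝ) ≤ (n:ℝ)+1)]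
          have hb : |gbinom x n| ≠ 0 := abs_ne_zero.2 (hz n)
          have hrn : r ^ n ≠ 0 := pow_ne_zero _ (ne_of_gt hr0')
          field_simp
        simp_rw [key]
        have h1 : Filter.Tendsto (fun n : ℕ => |x - n| / ((n:ℝ)+1)) Filter.atTop (nhds 1) := by
          have h2 : Filter.Tendsto (fun n : ℕ => 1 - (x+1) / ((n:ℝ)+1)) Filter.atTop (nhds 1) := by
            have := Filter.Tendsto.div_atTop (tendsto_const_nhds (x := x+1))
              (Filter.tendsto_atTop_add_const_right _ 1 tendsto_natCast_atTop_atTop)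
            simpa using (tendsto_const_nhds (x := (1:ℝ))).sub this
          apply h2.congr'
          filter_upwards [Filter.eventually_ge_atTop (Nat.ceil (|x|))] with n hn
          have hxn : x ≤ n := le_trans (le_abs_self x) (le_trans (Nat.le_ceil _) (by exact_mod_cast hn))
          have h2 : ((n : ℝ) + 1) ≠ 0 := by positivity
          rw [abs_of_nonpos (by linarith), neg_sub]
          field_simp
          ring
        simpa using h1.mul_const r

lemma slit_aux {w : ℂ} (hw : ‖w‖ < 1) : (1 + w) ∈ Complex.slitPlane := by
  left
  have h1 : |w.re| ≤ ‖w‖ := Complex.abs_re_le_norm w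
  simp only [Complex.add_re, Complex.one_re]
  have := neg_abs_le w.re
  linarith

lemma ne_zero_aux {w : ℂ} (hw : ‖w‖ < 1) : (1:ℂ) + w ≠ 0 :=
  Complex.slitPlane_ne_zero (slit_aux hw)

lemma hasSum_gbinom (x : ℝ) {z : ℂ} (hz : ‖z‖ < 1) :
    HasSum (fun k : ℕ => (gbinom x k : ℂ) * z ^ k) ((1 + z) ^ (x : ℂ)) := by
  set r : ℝ := (1 + ‖z‖) / 2 with hrdef
  have hzr : ‖z‖ < r := by rw [hrdef]; linarith
  have hr1 : r < 1 := by rw [hrdef]; linarith [norm_nonneg z]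
  have hr0 : 0 < r := by rw [hrdef]; linarith [norm_nonneg z]
  set r' : ℝ := (1 + r) / 2 with hr'def
  have hrr' : r < r' := by rw [hr'def]; linarith
  have hr'1 : r' < 1 := by rw [hr'def]; linarith
  have hr'0 : 0 < r' := by linarith
  clear_value r'
  clear_value r
  clear hrdef hr'def
  -- the summable bound for the derivative series
  have htend : Tendsto (fun k : ℕ => (k:ℝ) * (r / r') ^ k) atTop (𝓝 0) :=
    tendsto_self_mul_const_pow_of_lt_one (by positivity) ((div_lt_one hr'0).2 hrr')
  obtain ⟨M, hM⟩ := htend.bddAbove_range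
  have hMmem : ∀ k : ℕ, (k:ℝ) * (r / r') ^ k ≤ M := fun k => hM ⟨k, rfl⟩
  set u : ℕ → ℝ := fun k => |gbinom x k| * ((k:ℝ) * r ^ (k - 1)) with hudef
  have hu : Summable u := by
    refine Summable.of_nonneg_of_le (fun k => by positivity) ?_
      (((summable_gbinom_mul x hr'0.le hr'1).mul_left (M / r)))
    intro k
    have hkey : (k:ℝ) * r ^ (k-1) ≤ (M / r) * r' ^ k := by
      have h2 : (k:ℝ) * r ^ k ≤ M * r' ^ k := by
        have h3 : ((k:ℝ) * (r / r') ^ k) * r' ^ k ≤ M * r' ^ k :=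
          mul_le_mul_of_nonneg_right (hMmem k) (by positivity)
        calc (k:ℝ) * r ^ k = ((k:ℝ) * (r / r') ^ k) * r' ^ k := by
              rw [div_pow, mul_assoc, div_mul_cancel₀ _ (pow_ne_zero k hr'0.ne')]
          _ ≤ M * r' ^ k := h3
      rcases Nat.eq_zero_or_pos k with hk | hk
      · subst hk
        have hM0 : (0:ℝ) ≤ M := le_trans (by simp) (hMmem 0)
        simp only [Nat.cast_zero, zero_mul]
        positivity
      · obtain ⟨m, rfl⟩ := Nat.exists_eq_succ_of_ne_zero hk.ne'
        have : ((m+1:ℕ):ℝ) * r ^ (m + 1 - 1) = ((m+1:ℕ):ℝ) * r ^ (m+1) / r := by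
          rw [pow_succ]; field_simp; simp
        rw [this, div_mul_eq_mul_div]
        gcongr
    calc |gbinom x k| * ((k:ℝ) * r ^ (k-1)) ≤ |gbinom x k| * ((M/r) * r' ^ k) :=
          mul_le_mul_of_nonneg_left hkey (abs_nonneg _)
      _ = (M / r) * (|gbinom x k| * r' ^ k) := by ring
  -- summability of the series on the closed ball of radius r
  have hsum : ∀ w : ℂ, ‖w‖ ≤ r → Summable (fun k : ℕ => (gbinom x k : ℂ) * w ^ k) := by
    intro w hw
    apply Summable.of_norm
    refine Summable.of_nonneg_of_le (fun k => norm_nonneg _) ?_ (summable_gbinom_mul x hr0.le hr1)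
    intro k
    rw [norm_mul, norm_pow, Complex.norm_real, Real.norm_eq_abs]
    exact mul_le_mul_of_nonneg_left (pow_le_pow_left₀ (norm_nonneg w) hw k) (abs_nonneg _)
  set f : ℂ → ℂ := fun w => ∑' k : ℕ, (gbinom x k : ℂ) * w ^ k with hfdef
  set g' : ℕ → ℂ → ℂ := fun k w => (gbinom x k : ℂ) * ((k : ℂ) * w ^ (k - 1)) with hg'def
  have hg'bound : ∀ (k : ℕ) (y : ℂ), y ∈ Metric.ball (0:ℂ) r → ‖g' k y‖ ≤ u k := by
    intro k y hy
    have hyr : ‖y‖ ≤ r := by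
      rw [Metric.mem_ball, dist_zero_right] at hy; exact hy.le
    rw [hg'def]
    simp only [norm_mul, norm_pow, Complex.norm_real, Real.norm_eq_abs, Complex.norm_natCast,
      hudef]
    apply mul_le_mul_of_nonneg_left ?_ (abs_nonneg _)
    exact mul_le_mul_of_nonneg_left (pow_le_pow_left₀ (norm_nonneg y) hyr _) (Nat.cast_nonneg k)
  have h0mem : (0:ℂ) ∈ Metric.ball (0:ℂ) r := by
    rw [Metric.mem_ball, dist_zero_right, norm_zero]; exact hr0
  have hderiv : ∀ w ∈ Metric.ball (0:ℂ) r, HasDerivAt f (∑' k : ℕ, g' k w) w := by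
    intro w hw
    exact hasDerivAt_tsum_of_isPreconnected hu Metric.isOpen_ball
      (convex_ball (0:ℂ) r).isPreconnected
      (fun k y _ => (hasDerivAt_pow k y).const_mul _) hg'bound h0mem
      (hsum 0 (by simpa using hr0.le)) hw
  set D : ℂ → ℂ := fun w => ∑' k : ℕ, g' k w with hDdef
  have hrec : ∀ n : ℕ, ((n:ℂ) + 1) * (gbinom x (n+1) : ℂ) = ((x:ℂ) - n) * (gbinom x n : ℂ) := by
    intro n
    exact_mod_cast congrArg (Complex.ofReal) (gbinom_succ x n)
  have key : ∀ w ∈ Metric.ball (0:ℂ) r, ((1:ℂ) + w) * D w = (x:ℂ) * f w := by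
    intro w hw
    have hwr : ‖w‖ < r := by rwa [Metric.mem_ball, dist_zero_right] at hw
    have hg'sum : Summable (fun k => g' k w) :=
      Summable.of_norm (Summable.of_nonneg_of_le (fun k => norm_nonneg _)
        (fun k => hg'bound k w hw) hu)
    have hS1 : HasSum (fun k => g' k w) (D w) := hg'sum.hasSum
    have hA' : HasSum (fun n : ℕ => g' (n+1) w) (D w) := by
      have h0 : g' 0 w = 0 := by simp [hg'def]
      refine (hasSum_nat_add_iff (f := fun k => g' k w) 1).mpr ?_
      simpa [h0] using hS1
    have hA : HasSum (fun n : ℕ => ((x:ℂ) - n) * (gbinom x n : ℂ) * w ^ n) (D w) := by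
      have he : (fun n : ℕ => g' (n+1) w) =
          (fun n : ℕ => ((x:ℂ) - n) * (gbinom x n : ℂ) * w ^ n) := by
        funext n
        rw [hg'def]
        simp only [Nat.add_sub_cancel, Nat.cast_add, Nat.cast_one]
        rw [show (gbinom x (n+1) : ℂ) * (((n:ℂ)+1) * w ^ n)
            = (((n:ℂ)+1) * (gbinom x (n+1) : ℂ)) * w ^ n by ring, hrec n]
      rwa [he] at hA'
    have hB : HasSum (fun k : ℕ => (k:ℂ) * (gbinom x k : ℂ) * w ^ k) (w * D w) := by
      have := hS1.mul_left w
      have he : (fun k : ℕ => w * g' k w) =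
          (fun k : ℕ => (k:ℂ) * (gbinom x k : ℂ) * w ^ k) := by
        funext k
        rw [hg'def]
        cases k with
        | zero => simp
        | succ m =>
          simp only [Nat.add_sub_cancel, Nat.cast_add, Nat.cast_one, pow_succ]
          ring
      rwa [he] at this
    have hfw : HasSum (fun k : ℕ => (gbinom x k : ℂ) * w ^ k) (f w) := (hsum w hwr.le).hasSum
    have hX : HasSum (fun k : ℕ => (x:ℂ) * ((gbinom x k : ℂ) * w ^ k)) ((x:ℂ) * f w) :=
      hfw.mul_left _
    have hAB := hA.add hB
    have hAB' : HasSum (fun k : ℕ => (x:ℂ) * ((gbinom x k : ℂ) * w ^ k)) (D w + w * D w) := by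
      have he : (fun k : ℕ => ((x:ℂ) - k) * (gbinom x k : ℂ) * w ^ k
          + (k:ℂ) * (gbinom x k : ℂ) * w ^ k)
          = (fun k : ℕ => (x:ℂ) * ((gbinom x k : ℂ) * w ^ k)) := by
        funext k; ring
      rwa [he] at hAB
    have := hX.unique hAB'
    rw [this]; ring
  set F : ℂ → ℂ := fun w => f w * (1 + w) ^ (-(x:ℂ)) with hFdef
  have hFderiv : ∀ w ∈ Metric.ball (0:ℂ) r, HasDerivAt F 0 w := by
    intro w hw
    have hwr : ‖w‖ < r := by rwa [Metric.mem_ball, dist_zero_right] at hw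
    have hw1 : ‖w‖ < 1 := hwr.trans hr1
    have h1 := hderiv w hw
    have h2 : HasDerivAt (fun w : ℂ => ((1:ℂ) + w) ^ (-(x:ℂ)))
        ((-(x:ℂ)) * ((1:ℂ) + w) ^ (-(x:ℂ) - 1) * 1) w :=
      HasDerivAt.cpow_const ((hasDerivAt_id w).const_add 1) (slit_aux hw1)
    have h3 := h1.mul h2
    have e1 : ((1:ℂ) + w) ^ (-(x:ℂ)) = ((1:ℂ) + w) ^ (-(x:ℂ) - 1) * ((1:ℂ) + w) := by
      conv_lhs => rw [show (-(x:ℂ)) = (-(x:ℂ) - 1) + 1 by ring]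
      rw [Complex.cpow_add _ _ (ne_zero_aux hw1), Complex.cpow_one]
    have e2 : D w * ((1:ℂ) + w) ^ (-(x:ℂ))
        + f w * ((-(x:ℂ)) * ((1:ℂ) + w) ^ (-(x:ℂ) - 1) * 1) = 0 := by
      rw [e1]
      have hk := key w hw
      linear_combination (((1:ℂ) + w) ^ (-(x:ℂ) - 1)) * hk
    rw [← e2]
    exact h3
  have hconst : F z = F 0 := by
    have hzball : z ∈ Metric.ball (0:ℂ) r := by
      rw [Metric.mem_ball, dist_zero_right]; exact hzr
    refine Convex.is_const_of_fderivWithin_eq_zero (𝕜 := ℂ) (convex_ball (0:ℂ) r)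
      (fun w hw => ((hFderiv w hw).differentiableAt).differentiableWithinAt) ?_ hzball h0mem
    intro w hw
    have h := (hFderiv w hw).hasFDerivAt
    have h2 : fderivWithin ℂ F (Metric.ball (0:ℂ) r) w = fderiv ℂ F w :=
      fderivWithin_of_isOpen Metric.isOpen_ball hw
    rw [h2, h.fderiv]
    ext
    simp
  have hF0 : F 0 = 1 := by
    have hf0 : HasSum (fun k : ℕ => (gbinom x k : ℂ) * (0:ℂ) ^ k) 1 := by
      have := hasSum_single (f := fun k : ℕ => (gbinom x k : ℂ) * (0:ℂ) ^ k) 0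
        (fun b hb => by simp [zero_pow hb])
      simpa [gbinom_zero] using this
    rw [hFdef]
    simp only [add_zero, Complex.one_cpow, mul_one]
    exact hf0.tsum_eq
  have hz1 : ‖z‖ < 1 := hz
  have hfz : f z = ((1:ℂ) + z) ^ (x:ℂ) := by
    have h1 : f z * ((1:ℂ) + z) ^ (-(x:ℂ)) = 1 := by
      have h := hconst.trans hF0
      rw [hFdef] at h
      simpa using h
    have h2 : ((1:ℂ) + z) ^ (-(x:ℂ)) * ((1:ℂ) + z) ^ (x:ℂ) = 1 := by
      rw [← Complex.cpow_add _ _ (ne_zero_aux hz1), neg_add_cancel, Complex.cpow_zero]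
    calc f z = f z * (((1:ℂ) + z) ^ (-(x:ℂ)) * ((1:ℂ) + z) ^ (x:ℂ)) := by rw [h2, mul_one]
      _ = (f z * ((1:ℂ) + z) ^ (-(x:ℂ))) * ((1:ℂ) + z) ^ (x:ℂ) := by ring
      _ = ((1:ℂ) + z) ^ (x:ℂ) := by rw [h1, one_mul]
  have h := (hsum z hzr.le).hasSum
  have : (∑' (k : ℕ), (gbinom x k : ℂ) * z ^ k) = f z := by rw [hfdef]
  rwa [this, hfz] at h

set_option maxHeartbeats 2000000 in
/-- for `|u| < 1` and `λ ∈ ℝ`,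
`(1/2π) ∫₀^{2π} |1 − e^{iθ}u|^{−2λ} dθ = Σ_k binom(−λ,k)² |u|^{2k}`,
the series on the right being convergent. -/
theorem circle_moment_series (u : ℂ) (hu : ‖u‖ < 1) (l : ℝ) :
    Summable (fun k : ℕ => gbinom (-l) k ^ 2 * ‖u‖ ^ (2 * k)) ∧
    (1 / (2 * π)) * ∫ θ in (0:ℝ)..(2 * π),
        ‖1 - Complex.exp (θ * Complex.I) * u‖ ^ (-(2 * l))
      = ∑' k : ℕ, gbinom (-l) k ^ 2 * ‖u‖ ^ (2 * k) := by
  set c : ℕ → ℂ := fun k => (gbinom (-l) k : ℂ) * (-u) ^ k with hcdef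
  have hcnorm : ∀ k, ‖c k‖ = |gbinom (-l) k| * ‖u‖ ^ k := by
    intro k
    rw [hcdef]
    simp [Complex.norm_real, Real.norm_eq_abs, norm_pow]
  have hcs : Summable (fun k => ‖c k‖) := by
    simp_rw [hcnorm]
    exact summable_gbinom_mul (-l) (norm_nonneg u) hu
  have hsq : ∀ k, ‖c k‖ ^ 2 = gbinom (-l) k ^ 2 * ‖u‖ ^ (2 * k) := by
    intro k
    rw [hcnorm, mul_pow, sq_abs, ← pow_mul, mul_comm k 2]
  -- summability of the RHS series
  have hprodsum : Summable (fun p : ℕ × ℕ => ‖c p.1‖ * ‖c p.2‖) := by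
    apply summable_mul_of_summable_norm (f := fun k => ‖c k‖) (g := fun k => ‖c k‖) <;>
      simpa [Real.norm_eq_abs, abs_of_nonneg (norm_nonneg _)] using hcs
  have hSsum : Summable (fun k : ℕ => gbinom (-l) k ^ 2 * ‖u‖ ^ (2 * k)) := by
    have := hprodsum.comp_injective (i := fun k : ℕ => (k, k))
      (fun a b h => by simpa using congrArg Prod.fst h)
    apply this.congr
    intro k
    have := hsq k
    rw [sq ‖c k‖] at this
    simpa [Function.comp] using this
  refine ⟨hSsum, ?_⟩
  set T : ℕ → ℝ → ℂ := fun k θ => c k * Complex.exp ((k : ℂ) * ((θ : ℂ) * Complex.I)) with hTdef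
  set G : ℝ → ℂ := fun θ => (1 - Complex.exp ((θ:ℂ) * Complex.I) * u) ^ ((-l : ℝ) : ℂ) with hGdef
  have hEu : ∀ θ : ℝ, ‖-(Complex.exp ((θ:ℂ) * Complex.I) * u)‖ < 1 := by
    intro θ
    rw [norm_neg, norm_mul, Complex.norm_exp_ofReal_mul_I,
      one_mul]
    exact hu
  have hne : ∀ θ : ℝ, (1:ℂ) - Complex.exp ((θ:ℂ) * Complex.I) * u ≠ 0 := by
    intro θ
    have := ne_zero_aux (hEu θ)
    rwa [show (1:ℂ) + -(Complex.exp ((θ:ℂ) * Complex.I) * u)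
        = 1 - Complex.exp ((θ:ℂ) * Complex.I) * u by ring] at this
  have hG : ∀ θ : ℝ, HasSum (fun k => T k θ) (G θ) := by
    intro θ
    have h := hasSum_gbinom (-l) (hEu θ)
    rw [show (1:ℂ) + -(Complex.exp ((θ:ℂ) * Complex.I) * u)
        = 1 - Complex.exp ((θ:ℂ) * Complex.I) * u by ring] at h
    have he : (fun k : ℕ => (gbinom (-l) k : ℂ) * (-(Complex.exp ((θ:ℂ) * Complex.I) * u)) ^ k)
        = fun k => T k θ := by
      funext k
      rw [hTdef, hcdef]
      rw [show -(Complex.exp ((θ:ℂ) * Complex.I) * u)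
          = (-u) * Complex.exp ((θ:ℂ) * Complex.I) by ring, mul_pow, ← Complex.exp_nat_mul]
      ring
    rwa [he] at h
  have hTnorm : ∀ (k : ℕ) (θ : ℝ), ‖T k θ‖ = ‖c k‖ := by
    intro k θ
    rw [hTdef]
    have : ((k:ℂ) * ((θ:ℂ) * Complex.I)) = (((k * θ : ℝ)):ℂ) * Complex.I := by push_cast; ring
    rw [norm_mul, this, Complex.norm_exp_ofReal_mul_I,
      mul_one]
  have hGnorm : ∀ θ : ℝ, ‖1 - Complex.exp ((θ:ℂ) * Complex.I) * u‖ ^ (-(2*l)) = ‖G θ‖ ^ (2:ℕ) := by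
    intro θ
    have h1 : ‖G θ‖ = ‖1 - Complex.exp ((θ:ℂ) * Complex.I) * u‖ ^ (-l) := by
      rw [hGdef, Complex.norm_cpow_of_ne_zero (hne θ)]
      simp
    rw [h1, ← Real.rpow_natCast (_ ^ (-l)) 2, ← Real.rpow_mul (norm_nonneg _)]
    norm_num
    ring_nf
  have hconjT : ∀ (k : ℕ) (θ : ℝ), (starRingEnd ℂ) (T k θ)
      = (starRingEnd ℂ) (c k) * Complex.exp (-((k:ℂ) * ((θ:ℂ) * Complex.I))) := by
    intro k θ
    rw [hTdef]
    simp only [map_mul, ← Complex.exp_conj, map_neg]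
    congr 2
    simp [Complex.conj_I]
  have hFform : ∀ (j k : ℕ) (θ : ℝ), T j θ * (starRingEnd ℂ) (T k θ)
      = (c j * (starRingEnd ℂ) (c k)) * Complex.exp ((((j:ℂ) - k) * Complex.I) * θ) := by
    intro j k θ
    rw [hconjT, hTdef]
    rw [show c j * Complex.exp ((j:ℂ) * ((θ:ℂ) * Complex.I))
          * ((starRingEnd ℂ) (c k) * Complex.exp (-((k:ℂ) * ((θ:ℂ) * Complex.I))))
        = (c j * (starRingEnd ℂ) (c k)) * (Complex.exp ((j:ℂ) * ((θ:ℂ) * Complex.I))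
          * Complex.exp (-((k:ℂ) * ((θ:ℂ) * Complex.I)))) by ring, ← Complex.exp_add]
    congr 2
    ring
  have hTc : ∀ j : ℕ, Continuous (fun θ : ℝ => T j θ) := by
    intro j
    rw [hTdef]
    exact continuous_const.mul (Complex.continuous_exp.comp
      (continuous_const.mul (Complex.continuous_ofReal.mul continuous_const)))
  have hA : ∀ j k : ℕ, (∫ θ in (0:ℝ)..(2*π), T j θ * (starRingEnd ℂ) (T k θ))
      = if j = k then ((2*π : ℝ) : ℂ) * ((‖c j‖^2 : ℝ) : ℂ) else 0 := by
    intro j k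
    rw [intervalIntegral.integral_congr (fun θ _ => hFform j k θ)]
    rcases eq_or_ne j k with rfl | hjk
    · simp only [if_pos rfl, sub_self, zero_mul, Complex.exp_zero, mul_one]
      rw [intervalIntegral.integral_const, Complex.mul_conj, Complex.normSq_eq_norm_sq]
      rw [sub_zero]
      rw [Complex.real_smul]
      norm_num
    · rw [if_neg hjk]
      have hm : ((j:ℂ) - k) * Complex.I ≠ 0 :=
        mul_ne_zero (sub_ne_zero.2 (by exact_mod_cast hjk)) Complex.I_ne_zero
      rw [intervalIntegral.integral_const_mul, integral_exp_mul_complex hm]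
      have h2 : Complex.exp (((j:ℂ) - k) * Complex.I * ((2*π : ℝ):ℂ)) = 1 := by
        have : (((j:ℂ) - k) * Complex.I * ((2*π : ℝ):ℂ)) = ((j:ℤ) - (k:ℤ) : ℤ) * (2*π*Complex.I) := by
          push_cast; ring
        rw [this, Complex.exp_int_mul_two_pi_mul_I]
      have h3 : Complex.exp (((j:ℂ) - k) * Complex.I * ((0:ℝ):ℂ)) = 1 := by
        norm_num
      rw [h2, h3]
      simp
  have hInt : ∀ p : ℕ × ℕ, Integrable (fun θ => T p.1 θ * (starRingEnd ℂ) (T p.2 θ))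
      (volume.restrict (Set.Ioc (0:ℝ) (2*π))) := fun p =>
    ((hTc p.1).mul (continuous_star.comp (hTc p.2))).integrableOn_Ioc
  have hnormint : (fun p : ℕ × ℕ =>
        ∫ θ in Set.Ioc (0:ℝ) (2*π), ‖T p.1 θ * (starRingEnd ℂ) (T p.2 θ)‖)
      = fun p => (‖c p.1‖ * ‖c p.2‖) * (2*π) := by
    funext p
    have he : (fun θ : ℝ => ‖T p.1 θ * (starRingEnd ℂ) (T p.2 θ)‖)
        = fun _ => ‖c p.1‖ * ‖c p.2‖ := by
      funext θ
      rw [norm_mul, RCLike.norm_conj, hTnorm, hTnorm]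
    rw [he, setIntegral_const, Real.volume_real_Ioc_of_le (by positivity), smul_eq_mul, sub_zero,
      mul_comm]
  have hswap := MeasureTheory.integral_tsum_of_summable_integral_norm
    (μ := volume.restrict (Set.Ioc (0:ℝ) (2*π))) hInt
    (by rw [hnormint]; exact hprodsum.mul_right _)
  have hpt : ∀ θ : ℝ, (∑' p : ℕ×ℕ, T p.1 θ * (starRingEnd ℂ) (T p.2 θ))
      = G θ * (starRingEnd ℂ) (G θ) := by
    intro θ
    have h1 := hG θ
    have h2 : HasSum (fun k => (starRingEnd ℂ) (T k θ)) ((starRingEnd ℂ) (G θ)) := h1.star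
    have hPsum : Summable (fun p : ℕ×ℕ => T p.1 θ * (starRingEnd ℂ) (T p.2 θ)) := by
      refine summable_mul_of_summable_norm (f := fun k => T k θ)
        (g := fun k => (starRingEnd ℂ) (T k θ)) ?_ ?_
      · simp_rw [hTnorm]; exact hcs
      · simp_rw [RCLike.norm_conj, hTnorm]; exact hcs
    exact (h1.mul h2 hPsum).tsum_eq
  -- value of the diagonal sum
  set A : ℕ×ℕ → ℂ := fun p => if p.1 = p.2 then ((2*π : ℝ) : ℂ) * ((‖c p.1‖^2 : ℝ) : ℂ) else 0
    with hAdef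
  have hAsum : Summable A := by
    apply Summable.of_norm_bounded (g := fun p : ℕ×ℕ => (2*π) * (‖c p.1‖ * ‖c p.2‖))
      (hprodsum.mul_left _)
    intro p
    simp only [hAdef]
    rcases eq_or_ne p.1 p.2 with h | h
    · rw [if_pos h, norm_mul, ← h]
      simp only [Complex.norm_real, Real.norm_eq_abs]
      rw [abs_of_nonneg (by positivity), abs_of_nonneg (by positivity), pow_two]
    · rw [if_neg h, norm_zero]
      positivity
  have htsumA : ∑' p : ℕ×ℕ, A p = ((2*π : ℝ) : ℂ) * ((∑' k : ℕ, ‖c k‖^2 : ℝ) : ℂ) := by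
    rw [Summable.tsum_prod' hAsum (fun j => summable_of_ne_finset_zero (s := {j})
      (fun k hk => by simp only [hAdef]; exact if_neg (by simpa [eq_comm] using hk)))]
    have hrow : ∀ j : ℕ, (∑' k : ℕ, A (j, k)) = ((2*π : ℝ):ℂ) * ((‖c j‖^2 : ℝ):ℂ) := by
      intro j
      have he : (fun k : ℕ => A (j, k))
          = fun k => if k = j then ((2*π : ℝ):ℂ) * ((‖c j‖^2 : ℝ):ℂ) else 0 := by
        funext k
        simp only [hAdef]
        by_cases h : j = k
        · subst h; simp
        · rw [if_neg h, if_neg (Ne.symm h)]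
      rw [he, tsum_ite_eq j _]
    simp_rw [hrow]
    rw [tsum_mul_left, ← Complex.ofReal_tsum]
  -- assemble
  have key : ((∫ θ in (0:ℝ)..(2*π), ‖1 - Complex.exp ((θ:ℂ) * Complex.I) * u‖ ^ (-(2*l)) : ℝ) : ℂ)
      = ((2*π : ℝ) : ℂ) * ((∑' k : ℕ, ‖c k‖^2 : ℝ) : ℂ) := by
    rw [intervalIntegral.integral_congr (fun θ _ => hGnorm θ)]
    rw [show ((∫ θ in (0:ℝ)..(2*π), ‖G θ‖ ^ (2:ℕ) : ℝ) : ℂ)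
        = ∫ θ in (0:ℝ)..(2*π), ((‖G θ‖ ^ (2:ℕ) : ℝ) : ℂ) from
      (intervalIntegral.integral_ofReal).symm]
    have hptc : ∀ θ : ℝ, ((‖G θ‖ ^ (2:ℕ) : ℝ) : ℂ) = ∑' p : ℕ×ℕ, T p.1 θ * (starRingEnd ℂ) (T p.2 θ) := by
      intro θ
      rw [hpt θ, Complex.mul_conj, Complex.normSq_eq_norm_sq]
    rw [intervalIntegral.integral_congr (fun θ _ => hptc θ)]
    rw [intervalIntegral.integral_of_le (by positivity)]
    rw [← hswap]
    have : ∀ p : ℕ×ℕ, (∫ θ in Set.Ioc (0:ℝ) (2*π), T p.1 θ * (starRingEnd ℂ) (T p.2 θ)) = A p := by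
      intro p
      rw [← intervalIntegral.integral_of_le (by positivity : (0:ℝ) ≤ 2*π)]
      exact hA p.1 p.2
    simp_rw [this]
    exact htsumA
  rw [← Complex.ofReal_mul] at key
  have hIeq := Complex.ofReal_inj.1 key
  rw [hIeq]
  have hts : (∑' k : ℕ, ‖c k‖^2) = ∑' k : ℕ, gbinom (-l) k ^ 2 * ‖u‖ ^ (2*k) := tsum_congr hsq
  rw [hts]
  field_simp
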